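/- Let (x_α)_{α∈Λ^{<b}} be a family in a normed space with 0 ≤ ‖x_α‖ < 1 for all α. Then (x_α) is absolutely summable if and only if the product of the family (1 − ‖x_α‖)_{α∈Λ^{<b}} is strictly positive. -/

import Mathlib

open Set

noncomputable section

/-- Transfinite partial sums of a family indexed by a well-ordered set `Λ` with
least element `a` and supremum `b`.  `F γ` represents `Σ_{α ∈ Λ, α < γ} x α` for
`γ ∈ Λ ∪ {b}`:  the sum over the empty initial segment is `0`, the successor
recursion `F (S β) = x β + F β` holds, and at each limit element the partial
sums converge from the left. -/
def WOSumData {E : Type*} [SeminormedAddCommGroup E] {ι : Type*} [LinearOrder ι]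
    (Λ : Set ι) (a b : ι) (x F : ι → E) : Prop :=
  F a = 0 ∧
  (∀ β ∈ Λ, ∀ γ ∈ Λ ∪ {b}, β < γ → (∀ α ∈ Λ, α ≤ β ∨ γ ≤ α) → F γ = x β + F β) ∧
  (∀ γ ∈ Λ ∪ {b}, a < γ → (∀ β ∈ Λ, β < γ → ∃ α ∈ Λ, β < α ∧ α < γ) →
    ∀ ε > 0, ∃ β₀ ∈ Λ, β₀ < γ ∧ ∀ β ∈ Λ, β₀ ≤ β → β < γ → ‖F β - F γ‖ < ε)

/-- Transfinite partial products of a family indexed by a well-ordered set `Λ` with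
least element `a` and supremum `b`.  `F γ` represents `Π_{α ∈ Λ, α < γ} x α` for
`γ ∈ Λ ∪ {b}`:  the product over the empty initial segment is `1`, the successor
recursion `F (S β) = x β * F β` holds, and at each limit element the partial
products converge from the left. -/
def WOProdData {E : Type*} [NormedRing E] {ι : Type*} [LinearOrder ι]
    (Λ : Set ι) (a b : ι) (x F : ι → E) : Prop :=
  F a = 1 ∧
  (∀ β ∈ Λ, ∀ γ ∈ Λ ∪ {b}, β < γ → (∀ α ∈ Λ, α ≤ β ∨ γ ≤ α) → F γ = x β * F β) ∧
  (∀ γ ∈ Λ ∪ {b}, a < γ → (∀ β ∈ Λ, β < γ → ∃ α ∈ Λ, β < α ∧ α < γ) →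
    ∀ ε > 0, ∃ β₀ ∈ Λ, β₀ < γ ∧ ∀ β ∈ Λ, β₀ ≤ β → β < γ → ‖F β - F γ‖ < ε)

/-- For a family with ‖x α‖ < 1, absolute summability is equivalent to the product
of the family (1 − ‖x α‖) being strictly positive. -/
private lemma exp_lip {s t : ℝ} (hs : s ≤ 0) (ht : t ≤ 0) :
    |Real.exp s - Real.exp t| ≤ |s - t| := by
  wlog h : t ≤ s generalizing s t
  · rw [abs_sub_comm, abs_sub_comm s t]; exact this ht hs (le_of_not_ge h)
  rw [abs_of_nonneg (sub_nonneg.2 (Real.exp_le_exp.2 h)), abs_of_nonneg (sub_nonneg.2 h)]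
  have key : Real.exp s - Real.exp t = Real.exp s * (1 - Real.exp (t - s)) := by
    rw [mul_one_sub, ← Real.exp_add]; ring_nf
  rw [key]
  have h1 : Real.exp s ≤ 1 := Real.exp_le_one_iff.2 hs
  have h2 : 1 - Real.exp (t - s) ≤ s - t := by
    have := Real.add_one_le_exp (t - s); linarith
  have h3 : 0 ≤ 1 - Real.exp (t - s) := by
    have : Real.exp (t - s) ≤ 1 := Real.exp_le_one_iff.2 (by linarith)
    linarith
  calc Real.exp s * (1 - Real.exp (t - s)) ≤ 1 * (s - t) :=
        mul_le_mul h1 h2 h3 zero_le_one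
    _ = s - t := one_mul _

private lemma neglog_le {t : ℝ} (ht : 0 ≤ t) (ht2 : t ≤ 1/2) :
    -Real.log (1 - t) ≤ 2 * t := by
  have h4 : Real.exp (-(2 * t)) ≤ 1 - t := by
    have h5 : (2 * t) + 1 ≤ Real.exp (2 * t) := Real.add_one_le_exp _
    have h6 : Real.exp (-(2 * t)) = (Real.exp (2 * t))⁻¹ := Real.exp_neg _
    have h7 : (0:ℝ) < 1 + 2 * t := by linarith
    have h8 : Real.exp (-(2 * t)) ≤ (1 + 2 * t)⁻¹ := by
      rw [h6]
      exact inv_anti₀ h7 (by linarith)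
    have h9 : (1 + 2 * t)⁻¹ ≤ 1 - t := by
      rw [inv_le_iff_one_le_mul₀ h7]
      nlinarith
    linarith
  have h10 := Real.log_le_log (Real.exp_pos _) h4
  rwa [Real.log_exp, neg_le] at h10

private lemma sumData_of_summable {Λ : Set (WithTop ℝ)} {a b : WithTop ℝ}
    (ha : IsLeast Λ a) (hb : IsLUB Λ b)
    (z : WithTop ℝ → ℝ) (hz : ∀ α, 0 ≤ z α)
    (hsum : Summable ((Λ ∩ Iio b).indicator z)) :
    WOSumData Λ a b z (fun γ => ∑' α, (Λ ∩ Iio γ).indicator z α) := by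
  classical
  set f := (Λ ∩ Iio b).indicator z with hf
  have hle : ∀ γ ∈ Λ ∪ {b}, γ ≤ b := by
    rintro γ (hγ | rfl)
    · exact hb.1 hγ
    · exact le_rfl
  have hsub : ∀ γ ∈ Λ ∪ {b}, Λ ∩ Iio γ ⊆ Λ ∩ Iio b := by
    intro γ hγ α hα
    exact ⟨hα.1, lt_of_lt_of_le hα.2 (hle γ hγ)⟩
  have hS : ∀ s : Set (WithTop ℝ), s ⊆ Λ ∩ Iio b → Summable (s.indicator z) := by
    intro s hs
    refine Summable.of_nonneg_of_le (fun α => Set.indicator_nonneg (fun α _ => hz α) α)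
      (fun α => ?_) hsum
    by_cases hαs : α ∈ s
    · rw [Set.indicator_of_mem hαs, hf, Set.indicator_of_mem (hs hαs)]
    · rw [Set.indicator_of_notMem hαs]; exact Set.indicator_nonneg (fun α _ => hz α) α
  refine ⟨?_, ?_, ?_⟩
  · have : Λ ∩ Iio a = ∅ := by
      ext α; simp only [mem_inter_iff, mem_Iio, mem_empty_iff_false, iff_false, not_and, not_lt]
      exact fun hα => ha.2 hα
    simp [this]
  · intro β hβ γ hγ hβγ hgap
    have hβb : β ∈ Λ ∩ Iio b := ⟨hβ, lt_of_lt_of_le hβγ (hle γ hγ)⟩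
    have hset : Λ ∩ Iio γ = insert β (Λ ∩ Iio β) := by
      ext α
      simp only [mem_inter_iff, mem_Iio, mem_insert_iff]
      constructor
      · rintro ⟨hαΛ, hαγ⟩
        rcases hgap α hαΛ with h | h
        · rcases eq_or_lt_of_le h with h | h
          · exact Or.inl h
          · exact Or.inr ⟨hαΛ, h⟩
        · exact absurd hαγ (not_lt.2 h)
      · rintro (rfl | ⟨hαΛ, hαβ⟩)
        · exact ⟨hβ, hβγ⟩
        · exact ⟨hαΛ, hαβ.trans hβγ⟩
    have hfun : (Λ ∩ Iio γ).indicator z =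
        fun α => ({β} : Set (WithTop ℝ)).indicator z α + (Λ ∩ Iio β).indicator z α := by
      funext α
      by_cases hαβ : α = β
      · subst hαβ
        rw [Set.indicator_of_mem (by rw [hset]; exact mem_insert _ _),
          Set.indicator_of_mem (mem_singleton α),
          Set.indicator_of_notMem (by simp)]
        ring
      · rw [Set.indicator_of_notMem (show α ∉ ({β} : Set (WithTop ℝ)) from hαβ), zero_add]
        by_cases hα : α ∈ Λ ∩ Iio β
        · rw [Set.indicator_of_mem hα,
            Set.indicator_of_mem (by rw [hset]; exact mem_insert_of_mem _ hα)]
        · rw [Set.indicator_of_notMem hα, Set.indicator_of_notMem (by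
            rw [hset]; rintro (h | h); exact hαβ h; exact hα h)]
    have h1 : Summable (({β} : Set (WithTop ℝ)).indicator z) :=
      hS _ (by intro α hα; rw [mem_singleton_iff] at hα; subst hα; exact hβb)
    have h2 : Summable ((Λ ∩ Iio β).indicator z) :=
      hS _ (hsub β (Or.inl hβ))
    simp only
    rw [hfun, Summable.tsum_add h1 h2]
    congr 1
    rw [tsum_eq_single β]
    · rw [Set.indicator_of_mem (mem_singleton β)]
    · intro α hαβ
      exact Set.indicator_of_notMem (show α ∉ ({β} : Set (WithTop ℝ)) from hαβ) z
  · intro γ hγ haγ hrich ε hε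
    obtain ⟨T, hT⟩ := hsum.tsum_vanishing (Iio_mem_nhds hε)
    set T' : Finset (WithTop ℝ) := T.filter (fun t => t ∈ Λ ∧ t < γ) with hT'
    have hne : (insert a T').Nonempty := Finset.insert_nonempty _ _
    set c := (insert a T').max' hne with hc
    have hcmem : c ∈ insert a T' := Finset.max'_mem _ _
    have hcΛ : c ∈ Λ ∧ c < γ := by
      rcases Finset.mem_insert.1 hcmem with h | h
      · exact h ▸ ⟨ha.1, haγ⟩
      · exact (Finset.mem_filter.1 h).2
    obtain ⟨β₀, hβ₀Λ, hcβ₀, hβ₀γ⟩ := hrich c hcΛ.1 hcΛ.2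
    refine ⟨β₀, hβ₀Λ, hβ₀γ, ?_⟩
    intro β hβΛ hβ₀β hβγ
    set D := Λ ∩ Ico β γ with hD
    have hDb : D ⊆ Λ ∩ Iio b := by
      intro α hα
      exact hsub γ hγ ⟨hα.1, hα.2.2⟩
    have hsplit : (Λ ∩ Iio γ).indicator z =
        fun α => (Λ ∩ Iio β).indicator z α + D.indicator z α := by
      funext α
      simp only [Set.indicator_apply, hD, mem_inter_iff, mem_Iio, mem_Ico]
      by_cases h1 : α ∈ Λ
      · by_cases h2 : α < β
        · rw [if_pos ⟨h1, h2.trans hβγ⟩, if_pos ⟨h1, h2⟩,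
            if_neg (by rintro ⟨-, h3, -⟩; exact absurd h2 (not_lt.2 h3))]
          ring
        · by_cases h3 : α < γ
          · rw [if_pos ⟨h1, h3⟩, if_neg (by rintro ⟨-, h4⟩; exact h2 h4),
              if_pos ⟨h1, not_lt.1 h2, h3⟩]
            ring
          · rw [if_neg (by rintro ⟨-, h4⟩; exact h3 h4),
              if_neg (by rintro ⟨-, h4⟩; exact h3 (h4.trans hβγ)),
              if_neg (by rintro ⟨-, -, h4⟩; exact h3 h4)]
            ring
      · rw [if_neg (by rintro ⟨h, -⟩; exact h1 h), if_neg (by rintro ⟨h, -⟩; exact h1 h),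
          if_neg (by rintro ⟨h, -⟩; exact h1 h)]
        ring
    have h2 : Summable ((Λ ∩ Iio β).indicator z) := hS _ (hsub β (Or.inl hβΛ))
    have h3 : Summable (D.indicator z) := hS _ hDb
    have heq : (fun γ => ∑' α, (Λ ∩ Iio γ).indicator z α) γ
        = (fun γ => ∑' α, (Λ ∩ Iio γ).indicator z α) β + ∑' α, D.indicator z α := by
      simp only
      rw [hsplit, Summable.tsum_add h2 h3]
    have hdisj : Disjoint D (↑T : Set (WithTop ℝ)) := by
      rw [Set.disjoint_left]
      rintro t ⟨htΛ, htβ, htγ⟩ htT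
      have htT' : t ∈ T' := Finset.mem_filter.2 ⟨htT, htΛ, htγ⟩
      have : t ≤ c := Finset.le_max' _ _ (Finset.mem_insert_of_mem htT')
      exact absurd htβ (not_le.2 (lt_of_le_of_lt this (lt_of_lt_of_le hcβ₀ hβ₀β)))
    have hval : (∑' (x : D), f x) ∈ Iio ε := hT D hdisj
    have hfd : ∑' (x : D), f x = ∑' α, D.indicator z α := by
      rw [← tsum_subtype]
      exact tsum_congr fun x => Set.indicator_of_mem (hDb x.2) z
    have hnn : 0 ≤ ∑' α, D.indicator z α :=
      tsum_nonneg fun α => Set.indicator_nonneg (fun α _ => hz α) α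
    rw [heq, Real.norm_eq_abs, abs_sub_comm, add_sub_cancel_left, abs_of_nonneg hnn, ← hfd]
    exact hval

section Bounds

variable {Λ : Set (WithTop ℝ)} {a b : WithTop ℝ}

/-- dichotomy at a point `γ ∈ Λ ∪ {b}` with `a < γ`: either a predecessor with a gap,
or richness below. -/
private lemma succ_or_limit (γ : WithTop ℝ) :
    (∃ β ∈ Λ, β < γ ∧ ∀ α ∈ Λ, α ≤ β ∨ γ ≤ α) ∨
      (∀ β ∈ Λ, β < γ → ∃ α ∈ Λ, β < α ∧ α < γ) := by
  by_cases h : ∃ β ∈ Λ, β < γ ∧ ∀ α ∈ Λ, α < γ → α ≤ β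
  · obtain ⟨β, hβ, hβγ, hmax⟩ := h
    refine Or.inl ⟨β, hβ, hβγ, fun α hα => ?_⟩
    rcases lt_or_ge α γ with h' | h'
    · exact Or.inl (hmax α hα h')
    · exact Or.inr h'
  · push_neg at h
    refine Or.inr fun β hβ hβγ => ?_
    obtain ⟨α, hα, hαγ, hβα⟩ := h β hβ hβγ
    exact ⟨α, hα, hβα, hαγ⟩

private lemma base_case (ha : IsLeast Λ a) (hb : IsLUB Λ b) {γ : WithTop ℝ}
    (hγ : γ ∈ Λ ∪ {b}) (h : ¬ a < γ) : γ = a := by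
  rcases hγ with hγ | hγ
  · exact le_antisymm (not_lt.1 h) (ha.2 hγ)
  · rw [mem_singleton_iff] at hγ
    subst hγ
    exact le_antisymm (not_lt.1 h) (hb.1 ha.1)

private lemma sum_le_of_sumData (hWF : Λ.IsWF) (ha : IsLeast Λ a) (hb : IsLUB Λ b)
    {z : WithTop ℝ → ℝ} (hz : ∀ α, 0 ≤ z α) {F : WithTop ℝ → ℝ}
    (hF : WOSumData Λ a b z F) :
    ∀ γ ∈ Λ ∪ {b}, ∀ S : Finset (WithTop ℝ), ↑S ⊆ Λ ∩ Iio γ → ∑ α ∈ S, z α ≤ F γ := by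
  classical
  have hWF' : (Λ ∪ {b}).WellFoundedOn (· < ·) := hWF.union (Set.finite_singleton b).isWF
  intro γ hγ
  refine Set.WellFoundedOn.induction hWF' hγ
    (P := fun γ => ∀ S : Finset (WithTop ℝ), ↑S ⊆ Λ ∩ Iio γ → ∑ α ∈ S, z α ≤ F γ) ?_
  clear hγ γ
  intro γ hγ IH S hS
  by_cases haγ : a < γ
  · rcases succ_or_limit (Λ := Λ) γ with ⟨β, hβΛ, hβγ, hgap⟩ | hrich
    · have hFγ : F γ = z β + F β := hF.2.1 β hβΛ γ hγ hβγ hgap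
      have hS' : ↑(S.erase β) ⊆ Λ ∩ Iio β := by
        intro α hα
        rw [Finset.coe_erase, mem_diff] at hα
        have h1 := hS hα.1
        rcases hgap α h1.1 with h | h
        · rcases eq_or_lt_of_le h with h | h
          · exact absurd h hα.2
          · exact ⟨h1.1, h⟩
        · exact absurd h1.2 (not_lt.2 h)
      have hIH : ∑ α ∈ S.erase β, z α ≤ F β := IH β (Or.inl hβΛ) hβγ _ hS'
      have h1 : ∑ α ∈ S, z α ≤ z β + ∑ α ∈ S.erase β, z α := by
        by_cases hβS : β ∈ S
        · rw [← Finset.add_sum_erase _ _ hβS]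
        · rw [Finset.erase_eq_of_notMem hβS]
          linarith [hz β]
      linarith
    · refine le_of_forall_pos_le_add fun ε hε => ?_
      obtain ⟨β₀, hβ₀Λ, hβ₀γ, hclose⟩ := hF.2.2 γ hγ haγ hrich ε hε
      have hne : (insert β₀ S).Nonempty := Finset.insert_nonempty _ _
      set c := (insert β₀ S).max' hne with hc
      have hcmem : c ∈ insert β₀ S := Finset.max'_mem _ _
      have hcΛγ : c ∈ Λ ∧ c < γ := by
        rcases Finset.mem_insert.1 hcmem with h | h
        · exact h ▸ ⟨hβ₀Λ, hβ₀γ⟩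
        · exact ⟨(hS h).1, (hS h).2⟩
      obtain ⟨β, hβΛ, hcβ, hβγ⟩ := hrich c hcΛγ.1 hcΛγ.2
      have hβ₀β : β₀ ≤ β :=
        le_of_lt (lt_of_le_of_lt (Finset.le_max' _ _ (Finset.mem_insert_self _ _)) hcβ)
      have hSβ : ↑S ⊆ Λ ∩ Iio β := by
        intro α hα
        exact ⟨(hS hα).1, lt_of_le_of_lt (Finset.le_max' _ _ (Finset.mem_insert_of_mem hα)) hcβ⟩
      have hIH : ∑ α ∈ S, z α ≤ F β := IH β (Or.inl hβΛ) hβγ S hSβ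
      have := hclose β hβΛ hβ₀β hβγ
      rw [Real.norm_eq_abs, abs_lt] at this
      linarith [this.1, this.2]
  · have hγa := base_case ha hb hγ haγ
    subst hγa
    have : S = ∅ := by
      rw [← Finset.coe_eq_empty]
      refine eq_empty_of_subset_empty (hS.trans fun α hα => ?_)
      exact absurd (ha.2 hα.1) (not_le.2 hα.2)
    rw [this, Finset.sum_empty, hF.1]

private lemma prodData_bounds (hWF : Λ.IsWF) (ha : IsLeast Λ a) (hb : IsLUB Λ b)
    {w : WithTop ℝ → ℝ} (hw0 : ∀ α ∈ Λ, α < b → 0 ≤ w α) (hw1 : ∀ α ∈ Λ, α < b → w α ≤ 1)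
    {G : WithTop ℝ → ℝ} (hG : WOProdData Λ a b w G) :
    ∀ γ ∈ Λ ∪ {b}, 0 ≤ G γ ∧ ∀ S : Finset (WithTop ℝ), ↑S ⊆ Λ ∩ Iio γ →
      G γ ≤ ∏ α ∈ S, w α := by
  classical
  have hWF' : (Λ ∪ {b}).WellFoundedOn (· < ·) := hWF.union (Set.finite_singleton b).isWF
  have hlt : ∀ γ ∈ Λ ∪ {b}, ∀ α ∈ Λ, α < γ → α < b := by
    rintro γ (hγ | hγ) α hα hαγ
    · exact lt_of_lt_of_le hαγ (hb.1 hγ)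
    · rw [mem_singleton_iff] at hγ; subst hγ; exact hαγ
  intro γ hγ
  refine Set.WellFoundedOn.induction hWF' hγ
    (P := fun γ => 0 ≤ G γ ∧ ∀ S : Finset (WithTop ℝ), ↑S ⊆ Λ ∩ Iio γ →
      G γ ≤ ∏ α ∈ S, w α) ?_
  clear hγ γ
  intro γ hγ IH
  by_cases haγ : a < γ
  · rcases succ_or_limit (Λ := Λ) γ with ⟨β, hβΛ, hβγ, hgap⟩ | hrich
    · have hGγ : G γ = w β * G β := hG.2.1 β hβΛ γ hγ hβγ hgap
      have hwβ0 : 0 ≤ w β := hw0 β hβΛ (hlt γ hγ β hβΛ hβγ)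
      have hwβ1 : w β ≤ 1 := hw1 β hβΛ (hlt γ hγ β hβΛ hβγ)
      obtain ⟨hGβ0, hGβle⟩ := IH β (Or.inl hβΛ) hβγ
      constructor
      · rw [hGγ]; exact mul_nonneg hwβ0 hGβ0
      · intro S hS
        have hS' : ↑(S.erase β) ⊆ Λ ∩ Iio β := by
          intro α hα
          rw [Finset.coe_erase, mem_diff] at hα
          have h1 := hS hα.1
          rcases hgap α h1.1 with h | h
          · rcases eq_or_lt_of_le h with h | h
            · exact absurd h hα.2
            · exact ⟨h1.1, h⟩
          · exact absurd h1.2 (not_lt.2 h)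
        have hIH : G β ≤ ∏ α ∈ S.erase β, w α := hGβle _ hS'
        have hnn : ∀ α ∈ S, 0 ≤ w α := fun α hα =>
          hw0 α (hS hα).1 (hlt γ hγ α (hS hα).1 (hS hα).2)
        by_cases hβS : β ∈ S
        · rw [hGγ, ← Finset.mul_prod_erase _ _ hβS]
          exact mul_le_mul_of_nonneg_left hIH hwβ0
        · have h2 : G γ ≤ w β * ∏ α ∈ S, w α := by
            rw [hGγ, Finset.erase_eq_of_notMem hβS] at *
            exact mul_le_mul_of_nonneg_left hIH hwβ0
          have h3 : w β * ∏ α ∈ S, w α ≤ ∏ α ∈ S, w α := by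
            have hp : 0 ≤ ∏ α ∈ S, w α := Finset.prod_nonneg hnn
            nlinarith
          linarith
    · constructor
      · refine le_of_forall_pos_le_add fun ε hε => ?_
        obtain ⟨β₀, hβ₀Λ, hβ₀γ, hclose⟩ := hG.2.2 γ hγ haγ hrich ε hε
        have h1 := hclose β₀ hβ₀Λ le_rfl hβ₀γ
        rw [Real.norm_eq_abs, abs_lt] at h1
        have h2 := (IH β₀ (Or.inl hβ₀Λ) hβ₀γ).1
        linarith [h1.1, h1.2]
      · intro S hS
        refine le_of_forall_pos_le_add fun ε hε => ?_
        obtain ⟨β₀, hβ₀Λ, hβ₀γ, hclose⟩ := hG.2.2 γ hγ haγ hrich ε hε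
        have hne : (insert β₀ S).Nonempty := Finset.insert_nonempty _ _
        set c := (insert β₀ S).max' hne with hc
        have hcmem : c ∈ insert β₀ S := Finset.max'_mem _ _
        have hcΛγ : c ∈ Λ ∧ c < γ := by
          rcases Finset.mem_insert.1 hcmem with h | h
          · exact h ▸ ⟨hβ₀Λ, hβ₀γ⟩
          · exact ⟨(hS h).1, (hS h).2⟩
        obtain ⟨β, hβΛ, hcβ, hβγ⟩ := hrich c hcΛγ.1 hcΛγ.2
        have hβ₀β : β₀ ≤ β :=
          le_of_lt (lt_of_le_of_lt (Finset.le_max' _ _ (Finset.mem_insert_self _ _)) hcβ)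
        have hSβ : ↑S ⊆ Λ ∩ Iio β := by
          intro α hα
          exact ⟨(hS hα).1,
            lt_of_le_of_lt (Finset.le_max' _ _ (Finset.mem_insert_of_mem hα)) hcβ⟩
        have hIH : G β ≤ ∏ α ∈ S, w α := (IH β (Or.inl hβΛ) hβγ).2 S hSβ
        have h1 := hclose β hβΛ hβ₀β hβγ
        rw [Real.norm_eq_abs, abs_lt] at h1
        linarith [h1.1, h1.2]
  · have hγa := base_case ha hb hγ haγ
    subst hγa
    rw [hG.1]
    refine ⟨zero_le_one, fun S hS => ?_⟩
    have : S = ∅ := by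
      rw [← Finset.coe_eq_empty]
      refine eq_empty_of_subset_empty (hS.trans fun α hα => ?_)
      exact absurd (ha.2 hα.1) (not_le.2 hα.2)
    rw [this, Finset.prod_empty]

end Bounds

theorem stmt8 {E : Type*} [NormedAddCommGroup E] [NormedSpace ℝ E]
    {Λ : Set (WithTop ℝ)} {a b : WithTop ℝ} (hWF : Λ.IsWF)
    (ha : IsLeast Λ a) (hb : IsLUB Λ b)
    (x : WithTop ℝ → E)
    (hsmall : ∀ α ∈ Λ, α < b → ‖x α‖ < 1) :
    (∃ F : WithTop ℝ → ℝ, WOSumData Λ a b (fun α => ‖x α‖) F) ↔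
      (∃ G : WithTop ℝ → ℝ, WOProdData Λ a b (fun α => 1 - ‖x α‖) G ∧ 0 < G b) := by
  classical
  have hle : ∀ γ ∈ Λ ∪ {b}, γ ≤ b := by
    rintro γ (hγ | hγ)
    · exact hb.1 hγ
    · rw [mem_singleton_iff] at hγ; subst hγ; exact le_rfl
  constructor
  · rintro ⟨F, hF⟩
    set f := (Λ ∩ Iio b).indicator (fun α => ‖x α‖) with hfdef
    have h1 : Summable f := by
      refine summable_of_sum_le (c := F b)
        (fun α => Set.indicator_nonneg (fun α _ => norm_nonneg _) α) ?_
      intro u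
      rw [hfdef, Finset.sum_indicator_eq_sum_filter]
      refine sum_le_of_sumData hWF ha hb (fun α => norm_nonneg _) hF b (Or.inr rfl) _ ?_
      intro α hα
      rw [Finset.mem_coe, Finset.mem_filter] at hα
      exact hα.2
    set y : WithTop ℝ → ℝ :=
      fun α => if α ∈ Λ ∩ Iio b then -Real.log (1 - ‖x α‖) else 0 with hydef
    have hy0 : ∀ α, 0 ≤ y α := by
      intro α
      rw [hydef]
      simp only
      split_ifs with h
      · have hx1 : ‖x α‖ < 1 := hsmall α h.1 h.2
        have := Real.log_nonpos (by linarith) (by linarith [norm_nonneg (x α)] :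
          1 - ‖x α‖ ≤ 1)
        linarith
      · exact le_rfl
    have h2 : Summable ((Λ ∩ Iio b).indicator y) := by
      have hcof : ∀ᶠ α in Filter.cofinite, f α < 1/2 :=
        h1.tendsto_cofinite_zero.eventually_lt_const (by norm_num)
      refine Summable.of_norm_bounded_eventually (g := fun α => 2 * f α) (h1.mul_left 2) ?_
      filter_upwards [hcof] with α hα
      by_cases hm : α ∈ Λ ∩ Iio b
      · have hfα : f α = ‖x α‖ := Set.indicator_of_mem hm _
        have hyα : (Λ ∩ Iio b).indicator y α = -Real.log (1 - ‖x α‖) := by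
          rw [Set.indicator_of_mem hm, hydef]; simp only [if_pos hm]
        rw [Real.norm_eq_abs, abs_of_nonneg (by
          rw [Set.indicator_of_mem hm]; exact hy0 α), hyα, hfα]
        refine neglog_le (norm_nonneg _) ?_
        rw [← hfα]; exact le_of_lt hα
      · rw [Set.indicator_of_notMem hm, norm_zero]
        have : 0 ≤ f α := Set.indicator_nonneg (fun α _ => norm_nonneg _) α
        linarith
    have hH := sumData_of_summable ha hb y hy0 h2
    set H : WithTop ℝ → ℝ := fun γ => ∑' α, (Λ ∩ Iio γ).indicator y α with hHdef
    have hHnn : ∀ γ, 0 ≤ H γ := fun γ =>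
      tsum_nonneg fun α => Set.indicator_nonneg (fun α _ => hy0 α) α
    refine ⟨fun γ => Real.exp (-(H γ)), ⟨?_, ?_, ?_⟩, Real.exp_pos _⟩
    · show Real.exp (-(H a)) = 1
      rw [show H a = 0 from hH.1, neg_zero, Real.exp_zero]
    · intro β hβ γ hγ hβγ hgap
      have h3 : H γ = y β + H β := hH.2.1 β hβ γ hγ hβγ hgap
      have hβb : β ∈ Λ ∩ Iio b := ⟨hβ, lt_of_lt_of_le hβγ (hle γ hγ)⟩
      have hx1 : ‖x β‖ < 1 := hsmall β hβ hβb.2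
      show Real.exp (-(H γ)) = (1 - ‖x β‖) * Real.exp (-(H β))
      rw [h3, neg_add, Real.exp_add]
      congr 1
      rw [hydef]
      simp only [if_pos hβb]
      rw [neg_neg, Real.exp_log (by linarith)]
    · intro γ hγ haγ hrich ε hε
      obtain ⟨β₀, hβ₀Λ, hβ₀γ, hclose⟩ := hH.2.2 γ hγ haγ hrich ε hε
      refine ⟨β₀, hβ₀Λ, hβ₀γ, fun β hβ hβ₀β hβγ => ?_⟩
      have h4 := hclose β hβ hβ₀β hβγ
      rw [Real.norm_eq_abs] at h4 ⊢
      calc |Real.exp (-(H β)) - Real.exp (-(H γ))| ≤ |(-(H β)) - (-(H γ))| :=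
            exp_lip (neg_nonpos.2 (hHnn β)) (neg_nonpos.2 (hHnn γ))
        _ = |H β - H γ| := by rw [neg_sub_neg, abs_sub_comm]
        _ < ε := h4
  · rintro ⟨G, hG, hGb⟩
    have hw0 : ∀ α ∈ Λ, α < b → 0 ≤ 1 - ‖x α‖ := fun α hα hαb => by
      linarith [hsmall α hα hαb]
    have hw1 : ∀ α ∈ Λ, α < b → 1 - ‖x α‖ ≤ 1 := fun α hα hαb => by
      linarith [norm_nonneg (x α)]
    have hbd := (prodData_bounds hWF ha hb hw0 hw1 hG b (Or.inr rfl)).2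
    have key : ∀ u : Finset (WithTop ℝ), ↑u ⊆ Λ ∩ Iio b →
        ∑ α ∈ u, ‖x α‖ ≤ -Real.log (G b) := by
      intro u hu
      have hpos : ∀ α ∈ u, 0 < 1 - ‖x α‖ := fun α hα => by
        have := hsmall α (hu hα).1 (hu hα).2; linarith
      have h5 : G b ≤ ∏ α ∈ u, (1 - ‖x α‖) := hbd u hu
      have h6 : Real.log (G b) ≤ ∑ α ∈ u, Real.log (1 - ‖x α‖) := by
        rw [← Real.log_prod (fun α hα => ne_of_gt (hpos α hα))]
        exact Real.log_le_log hGb h5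
      have h7 : ∑ α ∈ u, Real.log (1 - ‖x α‖) ≤ ∑ α ∈ u, -‖x α‖ :=
        Finset.sum_le_sum fun α hα => by
          have := Real.log_le_sub_one_of_pos (hpos α hα); linarith
      rw [Finset.sum_neg_distrib] at h7
      linarith
    have h1 : Summable ((Λ ∩ Iio b).indicator (fun α => ‖x α‖)) := by
      refine summable_of_sum_le (c := -Real.log (G b))
        (fun α => Set.indicator_nonneg (fun α _ => norm_nonneg _) α) ?_
      intro u
      rw [Finset.sum_indicator_eq_sum_filter]
      refine key _ ?_
      intro α hα
      rw [Finset.mem_coe, Finset.mem_filter] at hα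
      exact hα.2
    exact ⟨_, sumData_of_summable ha hb _ (fun α => norm_nonneg _) h1⟩
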